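/- The polynomial G₅(r) = 44r⁴ - 68r³ - 121r² + 22r + 23 has exactly one root in the interval (0,1), and G₅(r) ≥ 0 for r in [0, r₁] and G₅(r) ≤ 0 for r in [r₁, 1], where r₁ is that root. -/

import Mathlib

private noncomputable def G5 : ℝ → ℝ := fun x => 44*x^4 - 68*x^3 - 121*x^2 + 22*x + 23

private lemma G5_anti : StrictAntiOn G5 (Set.Icc (1/10 : ℝ) 1) := by
  have h : ∀ x ∈ interior (Set.Icc (1/10 : ℝ) 1),
      deriv G5 x < 0 := by
    intro x hx
    rw [interior_Icc] at hx
    obtain ⟨h1, h2⟩ := hx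
    have H : HasDerivAt G5 (176*x^3 - 204*x^2 - 242*x + 22) x := by
      unfold G5
      have h4 := (hasDerivAt_pow 4 x).const_mul (44:ℝ)
      have h3 := (hasDerivAt_pow 3 x).const_mul (68:ℝ)
      have h2 := (hasDerivAt_pow 2 x).const_mul (121:ℝ)
      have h1 := (hasDerivAt_id x).const_mul (22:ℝ)
      refine ((((h4.sub h3).sub h2).add h1).add_const 23).congr_deriv ?_
      push_cast
      ring
    have hd : deriv G5 x = 176*x^3 - 204*x^2 - 242*x + 22 := H.deriv
    rw [hd]
    nlinarith [sq_nonneg x, mul_pos (by linarith : (0:ℝ) < x) (by linarith : (0:ℝ) < x)]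
  exact StrictAntiOn.mono
    (strictAntiOn_of_deriv_neg (convex_Icc _ _)
      (by unfold G5; fun_prop) h) (le_refl _)

private lemma G5_pos_small : ∀ x : ℝ, 0 ≤ x → x < 1/10 → 0 < G5 x := by
  intro x h0 h1
  unfold G5
  nlinarith [pow_le_pow_left₀ h0 h1.le 2, pow_le_pow_left₀ h0 h1.le 3, pow_nonneg h0 4]

theorem stmt10 :
    ∃ r₁ ∈ Set.Ioo (0:ℝ) 1,
      44*r₁^4 - 68*r₁^3 - 121*r₁^2 + 22*r₁ + 23 = 0 ∧
      (∀ x ∈ Set.Ioo (0:ℝ) 1, 44*x^4 - 68*x^3 - 121*x^2 + 22*x + 23 = 0 → x = r₁) ∧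
      (∀ r ∈ Set.Icc (0:ℝ) r₁, 0 ≤ 44*r^4 - 68*r^3 - 121*r^2 + 22*r + 23) ∧
      (∀ r ∈ Set.Icc r₁ (1:ℝ), 44*r^4 - 68*r^3 - 121*r^2 + 22*r + 23 ≤ 0) := by
  have hcont : ContinuousOn G5 (Set.Icc (1/10 : ℝ) 1) := by unfold G5; fun_prop
  have hsub : Set.Icc (G5 1) (G5 (1/10)) ⊆ G5 '' Set.Icc (1/10 : ℝ) 1 :=
    intermediate_value_Icc' (by norm_num) hcont
  have h0mem : (0:ℝ) ∈ Set.Icc (G5 1) (G5 (1/10)) := by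
    constructor <;> (unfold G5; norm_num)
  obtain ⟨r₁, hr₁mem, hr₁⟩ := hsub h0mem
  obtain ⟨hra, hrb⟩ := hr₁mem
  have hr1ne : r₁ ≠ 1 := by
    intro h; rw [h] at hr₁; unfold G5 at hr₁; norm_num at hr₁
  have hr1lt : r₁ < 1 := lt_of_le_of_ne hrb hr1ne
  have hmem10 : r₁ ∈ Set.Icc (1/10 : ℝ) 1 := ⟨hra, hrb⟩
  refine ⟨r₁, ⟨by linarith, hr1lt⟩, hr₁, ?_, ?_, ?_⟩
  · intro x ⟨hx0, hx1⟩ hx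
    have hxg : G5 x = 0 := hx
    have hxge : (1/10:ℝ) ≤ x := by
      by_contra h
      push_neg at h
      have := G5_pos_small x hx0.le h
      linarith [hxg ▸ this]
    have hxmem : x ∈ Set.Icc (1/10 : ℝ) 1 := ⟨hxge, hx1.le⟩
    exact G5_anti.injOn hxmem hmem10 (by rw [hxg, hr₁])
  · intro r ⟨h0, h1⟩
    by_cases h : r < 1/10
    · exact (G5_pos_small r h0 h).le
    · push_neg at h
      have := G5_anti.antitoneOn ⟨h, by linarith⟩ hmem10 h1
      rw [hr₁] at this
      exact this
  · intro r ⟨h0, h1⟩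
    have := G5_anti.antitoneOn hmem10 ⟨by linarith, h1⟩ h0
    rw [hr₁] at this
    exact this
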